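/- arXiv:1706.06707 — 5 statements merged into one kernel-verified Lean document; each statement's English description precedes it below -/
import Mathlib

section
/- Let k be a field, let A = (A_{ij}) be a 4×4 matrix of nonnegative integers with det(A) ≠ 0, and let d be a positive integer such that d·A⁻¹ has integer entries. If λ = (λ₀,λ₁,λ₂,λ₃) ∈ (k×)⁴ satisfies F_A(λ₀x₀, λ₁x₁, λ₂x₂, λ₃x₃) = F_A(x₀,x₁,x₂,x₃) as polynomials, then λ_i^d = 1 for every i; that is, Aut(F_A) is a subgroup of μ_d⁴. -/
open MvPolynomial

/-- The polynomial `F_A` associated to a 4×4 matrix of nonnegative integers. -/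
noncomputable def FA (k : Type*) [CommRing k] (A : Matrix (Fin 4) (Fin 4) ℕ) :
    MvPolynomial (Fin 4) k :=
  ∑ i : Fin 4, ∏ j : Fin 4, (X j : MvPolynomial (Fin 4) k) ^ A i j

private lemma zpow_sum' {G : Type*} [CommGroup G] (x : G) {ι : Type*} (s : Finset ι)
    (f : ι → ℤ) : x ^ (∑ i ∈ s, f i) = ∏ i ∈ s, x ^ f i := by
  induction s using Finset.cons_induction with
  | empty => simp
  | cons a s ha ih => simp [Finset.sum_cons, Finset.prod_cons, zpow_add, ih]

/-- If `det A ≠ 0` and `d·A⁻¹` is an integral matrix, then any `λ ∈ (kˣ)⁴` leaving `F_A`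
invariant satisfies `λᵢᵈ = 1` for all `i`; i.e. `Aut(F_A) ⊆ μ_d⁴`. -/
theorem aut_FA_subset_mu_d
    (k : Type*) [Field k] (A : Matrix (Fin 4) (Fin 4) ℕ)
    (hA : (A.map (Nat.cast : ℕ → ℤ)).det ≠ 0)
    (d : ℕ) (hd : 0 < d)
    (hdA : ∀ i j, ∃ z : ℤ, (d : ℚ) * ((A.map (Nat.cast : ℕ → ℚ))⁻¹ i j) = (z : ℚ))
    (lam : Fin 4 → kˣ)
    (hlam : (aeval fun j : Fin 4 => C ((lam j : k)) * X j) (FA k A) = FA k A) :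
    ∀ i, (lam i : k) ^ d = 1 := by
  classical
  -- rows are distinct
  set s : Fin 4 → (Fin 4 →₀ ℕ) := fun i => Finsupp.equivFunOnFinite.symm (A i) with hs
  have hs_inj : Function.Injective s := by
    intro i i' h
    by_contra hne
    apply hA
    apply Matrix.det_zero_of_row_eq hne
    have h' : A i = A i' := Finsupp.equivFunOnFinite.symm.injective h
    ext j
    simp [Matrix.map_apply, congrFun h' j]
  have hmono : ∀ i, (∏ j, (X j : MvPolynomial (Fin 4) k) ^ A i j) = monomial (s i) 1 := by
    intro i
    rw [monomial_eq, C_1, one_mul, Finsupp.prod_fintype]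
    · rfl
    · intro j; simp
  have hFA : FA k A = ∑ i, monomial (s i) (1 : k) := by
    unfold FA
    exact Finset.sum_congr rfl fun i _ => hmono i
  have haev : (aeval fun j : Fin 4 => C ((lam j : k)) * X j) (FA k A)
      = ∑ i, monomial (s i) (∏ j, (lam j : k) ^ A i j) := by
    unfold FA
    rw [map_sum]
    refine Finset.sum_congr rfl fun i _ => ?_
    rw [map_prod]
    simp only [map_pow, aeval_X, mul_pow]
    rw [Finset.prod_mul_distrib]
    have : (∏ j, (C ((lam j : k)) : MvPolynomial (Fin 4) k) ^ A i j)
        = C (∏ j, (lam j : k) ^ A i j) := by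
      rw [map_prod]
      exact Finset.prod_congr rfl fun j _ => (C_pow _ _).symm
    rw [this, hmono i, C_mul_monomial, mul_one]
  have key : ∀ i, (∏ j, (lam j : k) ^ A i j) = 1 := by
    intro i
    have h0 := hlam
    rw [haev] at h0
    rw [hFA] at h0
    have h := congrArg (coeff (s i)) h0
    simp only [coeff_sum, coeff_monomial] at h
    rw [Finset.sum_eq_single i, Finset.sum_eq_single i] at h
    · simpa using h
    · intro b _ hb; simp [hs_inj.ne hb]
    · simp
    · intro b _ hb; simp [hs_inj.ne hb]
    · simp
  have keyU : ∀ i, (∏ j, lam j ^ (A i j : ℤ)) = (1 : kˣ) := by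
    intro i
    ext
    simp only [Units.val_one]
    rw [← key i, ← Units.coeHom_apply, map_prod]
    exact Finset.prod_congr rfl fun j _ => by
      rw [zpow_natCast]
      simp
  -- matrix part
  set Aq := A.map (Nat.cast : ℕ → ℚ) with hAqdef
  have hAq : Aq.det ≠ 0 := by
    have h1 : Aq = (A.map (Nat.cast : ℕ → ℤ)).map ⇑(Int.castRingHom ℚ) := by
      ext i j; rw [hAqdef]; simp [Matrix.map_apply]
    rw [h1, ← RingHom.mapMatrix_apply, ← RingHom.map_det]
    intro h
    apply hA
    rw [show ((Int.castRingHom ℚ) (A.map (Nat.cast : ℕ → ℤ)).det : ℚ)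
      = (((A.map (Nat.cast : ℕ → ℤ)).det : ℤ) : ℚ) from rfl] at h
    exact_mod_cast h
  have hmul : Aq⁻¹ * Aq = 1 := Matrix.nonsing_inv_mul _ (Ne.isUnit hAq)
  set B : Fin 4 → Fin 4 → ℤ := fun i j => (hdA i j).choose with hBdef
  have hB : ∀ i j, (d : ℚ) * (Aq⁻¹ i j) = ((B i j : ℤ) : ℚ) := fun i j => (hdA i j).choose_spec
  have hBA : ∀ i j, (∑ r, B i r * (A r j : ℤ)) = if i = j then (d : ℤ) else 0 := by
    intro i j
    have h1 : ((∑ r, B i r * (A r j : ℤ) : ℤ) : ℚ)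
        = (d : ℚ) * ∑ r, (Aq⁻¹ i r) * (Aq r j) := by
      push_cast
      rw [Finset.mul_sum]
      refine Finset.sum_congr rfl fun r _ => ?_
      rw [← hB i r]
      have : Aq r j = ((A r j : ℕ) : ℚ) := by rw [hAqdef]; simp [Matrix.map_apply]
      rw [this]
      ring
    have h2 : (∑ r, (Aq⁻¹ i r) * (Aq r j)) = (1 : Matrix (Fin 4) (Fin 4) ℚ) i j := by
      rw [← hmul]; rfl
    rw [h2, Matrix.one_apply] at h1
    have : ((∑ r, B i r * (A r j : ℤ) : ℤ) : ℚ) = ((if i = j then (d : ℤ) else 0 : ℤ) : ℚ) := by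
      rw [h1]; split <;> simp
    exact_mod_cast this
  intro i
  have hu : lam i ^ (d : ℤ) = 1 := by
    calc lam i ^ (d : ℤ) = ∏ j, lam j ^ (if i = j then (d : ℤ) else 0) := by
          rw [Finset.prod_congr rfl (fun j _ => show lam j ^ (if i = j then (d:ℤ) else 0)
            = if i = j then lam j ^ (d:ℤ) else 1 by split <;> simp),
            Finset.prod_ite_eq]
          simp
      _ = ∏ j, lam j ^ (∑ r, B i r * (A r j : ℤ)) := by
          refine Finset.prod_congr rfl fun j _ => ?_
          rw [hBA i j]
      _ = ∏ j, ∏ r, (lam j ^ (A r j : ℤ)) ^ B i r := by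
          refine Finset.prod_congr rfl fun j _ => ?_
          rw [zpow_sum']
          refine Finset.prod_congr rfl fun r _ => ?_
          rw [mul_comm, zpow_mul]
      _ = ∏ r, (∏ j, lam j ^ (A r j : ℤ)) ^ B i r := by
          rw [Finset.prod_comm]
          refine Finset.prod_congr rfl fun r _ => ?_
          rw [Finset.prod_zpow]
      _ = 1 := by
          refine Finset.prod_eq_one fun r _ => ?_
          rw [keyU r, one_zpow]
  have := congrArg Units.val hu
  simpa [zpow_natCast] using this
end

section
/- Let k be a field, let A = (A_{ij}) be a 4×4 matrix of nonnegative integers with det(A) ≠ 0, let d be a positive integer such that d·A⁻¹ has integer entries, and assume the characteristic of k does not divide d. Fix a primitive d-th root of unity ζ ∈ k. Then for a = (a₀,a₁,a₂,a₃) ∈ ℤ⁴, the tuple (ζ^{a₀}, ζ^{a₁}, ζ^{a₂}, ζ^{a₃}) belongs to Aut(F_A) if and only if A·aᵀ ≡ 0 (mod d), i.e., every entry of the vector A·aᵀ is divisible by d. -/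
open MvPolynomial

/-- With `ζ` a primitive `d`-th root of unity, the tuple `(ζ^{a₀},…,ζ^{a₃})` belongs to
`Aut(F_A)` if and only if `A·aᵀ ≡ 0 (mod d)`. -/
theorem zeta_pow_mem_aut_iff
    (k : Type*) [Field k] (A : Matrix (Fin 4) (Fin 4) ℕ)
    (hA : (A.map (Nat.cast : ℕ → ℤ)).det ≠ 0)
    (d : ℕ) (hd : 0 < d)
    (hdA : ∀ i j, ∃ z : ℤ, (d : ℚ) * ((A.map (Nat.cast : ℕ → ℚ))⁻¹ i j) = (z : ℚ))
    (hchar : ¬ (ringChar k ∣ d))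
    (ζ : k) (hζ : IsPrimitiveRoot ζ d) (a : Fin 4 → ℤ) :
    ((aeval fun j : Fin 4 => C (ζ ^ a j) * X j) (FA k A) = FA k A) ↔
      ∀ i, (d : ℤ) ∣ ∑ j, (A i j : ℤ) * a j := by
  classical
  have hζ0 : ζ ≠ 0 := hζ.ne_zero hd.ne'
  set s : Fin 4 → ℤ := fun i => ∑ j, (A i j : ℤ) * a j with hs
  set e : Fin 4 → (Fin 4 →₀ ℕ) := fun i => Finsupp.equivFunOnFinite.symm (A i) with he
  -- `e` is injective since `A` has nonzero determinant
  have hinj : Function.Injective e := by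
    intro i i' h
    by_contra hne
    apply hA
    refine Matrix.det_zero_of_row_eq hne ?_
    have hAA : A i = A i' := Finsupp.equivFunOnFinite.symm.injective h
    funext j
    simp [Matrix.map_apply, congrFun hAA j]
  have hmono : ∀ (i : Fin 4) (c : k), C c * ∏ j : Fin 4, (X j : MvPolynomial (Fin 4) k) ^ A i j
      = monomial (e i) c := by
    intro i c
    rw [monomial_eq]
    congr 1
    rw [Finsupp.prod_fintype]
    · simp [he]
    · intro j; simp
  have hprod : ∀ (t : Finset (Fin 4)) (c : Fin 4 → ℤ),
      ∏ j ∈ t, ζ ^ c j = ζ ^ (∑ j ∈ t, c j) := by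
    intro t c
    induction t using Finset.induction_on with
    | empty => simp
    | insert _ _ hnm ih => rw [Finset.prod_insert hnm, Finset.sum_insert hnm, zpow_add₀ hζ0, ih]
  -- compute the action of `aeval` on each monomial
  have hterm : ∀ i : Fin 4,
      (aeval fun j : Fin 4 => C (ζ ^ a j) * X j)
        (∏ j : Fin 4, (X j : MvPolynomial (Fin 4) k) ^ A i j)
      = monomial (e i) (ζ ^ s i) := by
    intro i
    rw [map_prod]
    have hX : ∀ j : Fin 4,
        (aeval fun j : Fin 4 => C (ζ ^ a j) * X j)
          ((X j : MvPolynomial (Fin 4) k) ^ A i j)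
        = C (ζ ^ ((A i j : ℤ) * a j)) * (X j : MvPolynomial (Fin 4) k) ^ A i j := by
      intro j
      rw [map_pow, aeval_X, mul_pow, ← C_pow, ← zpow_natCast (ζ ^ a j), ← zpow_mul,
        mul_comm (a j)]
    simp_rw [hX]
    rw [Finset.prod_mul_distrib]
    have hCprod : (∏ x : Fin 4, (C (ζ ^ ((A i x : ℤ) * a x)) : MvPolynomial (Fin 4) k))
        = C (ζ ^ s i) := by
      rw [← map_prod, hprod]
    rw [hCprod, hmono]
  have hLHS : (aeval fun j : Fin 4 => C (ζ ^ a j) * X j) (FA k A)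
      = ∑ i : Fin 4, monomial (e i) (ζ ^ s i) := by
    rw [FA, map_sum]
    exact Finset.sum_congr rfl fun i _ => hterm i
  have hFA : FA k A = ∑ i : Fin 4, monomial (e i) (1 : k) := by
    rw [FA]
    refine Finset.sum_congr rfl fun i _ => ?_
    rw [← hmono i 1, map_one, one_mul]
  have hcoeff : ∀ (c : Fin 4 → k) (i : Fin 4),
      coeff (e i) (∑ i' : Fin 4, monomial (e i') (c i')) = c i := by
    intro c i
    rw [MvPolynomial.coeff_sum]
    rw [Finset.sum_eq_single i]
    · simp [coeff_monomial]
    · intro i' _ hne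
      rw [coeff_monomial, if_neg (fun h => hne (hinj h))]
    · intro h; exact absurd (Finset.mem_univ i) h
  rw [hLHS, hFA]
  constructor
  · intro h i
    have := congrArg (coeff (e i)) h
    rw [hcoeff, hcoeff] at this
    exact (hζ.zpow_eq_one_iff_dvd (s i)).mp this
  · intro h
    refine Finset.sum_congr rfl fun i _ => ?_
    rw [(hζ.zpow_eq_one_iff_dvd (s i)).mpr (h i)]
end

section
/- Let k be an algebraically closed field of characteristic p ≥ 0, and let A = (A_{ij}) be a 4×4 matrix of nonnegative integers with det(A) ≠ 0 and p ∤ det(A). Then the group Aut(F_A) = {λ ∈ (k×)⁴ : F_A(λ₀x₀,λ₁x₁,λ₂x₂,λ₃x₃) = F_A(x₀,x₁,x₂,x₃)} is finite of cardinality |det(A)|. -/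
open MvPolynomial

/-- The group `Aut(F_A)` of diagonal symmetries of `F_A`. -/
def AutFA (k : Type*) [Field k] (A : Matrix (Fin 4) (Fin 4) ℕ) : Set (Fin 4 → kˣ) :=
  {lam | (aeval fun j : Fin 4 => C ((lam j : k)) * X j) (FA k A) = FA k A}

private lemma autFA_prodpow (k : Type*) [CommRing k] (s : Fin 4 → ℕ) :
    ∏ j : Fin 4, (X j : MvPolynomial (Fin 4) k) ^ s j
      = monomial (Finsupp.equivFunOnFinite.symm s) 1 :=
  calc ∏ j : Fin 4, (X j : MvPolynomial (Fin 4) k) ^ s j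
      = ∏ j ∈ (Finsupp.equivFunOnFinite.symm s).support,
          (X j : MvPolynomial (Fin 4) k) ^ (Finsupp.equivFunOnFinite.symm s) j :=
        (Finset.prod_subset (Finset.subset_univ _) fun x _ hx => by
          rw [show s x = 0 from Finsupp.notMem_support_iff.mp hx, pow_zero]).symm
    _ = _ := prod_X_pow_eq_monomial

private lemma autFA_mem_iff (k : Type*) [Field k] (A : Matrix (Fin 4) (Fin 4) ℕ)
    (hA : (A.map (Nat.cast : ℕ → ℤ)).det ≠ 0) (lam : Fin 4 → kˣ) :
    ((aeval fun j : Fin 4 => C ((lam j : k)) * X j) (FA k A) = FA k A)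
      ↔ ∀ i : Fin 4, ∏ j : Fin 4, lam j ^ A i j = 1 := by
  classical
  set d : Fin 4 → (Fin 4 →₀ ℕ) := fun i => Finsupp.equivFunOnFinite.symm (A i) with hd
  have hdinj : Function.Injective d := by
    intro i i' h
    by_contra hne
    apply hA
    apply Matrix.det_zero_of_row_eq hne
    have : A i = A i' := Finsupp.equivFunOnFinite.symm.injective h
    funext j
    simp [Matrix.map_apply, congrFun this j]
  set c : Fin 4 → k := fun i => ∏ j, (lam j : k) ^ A i j with hc
  have key : (aeval fun j : Fin 4 => C ((lam j : k)) * X j) (FA k A)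
      = ∑ i : Fin 4, monomial (d i) (c i) := by
    rw [FA, map_sum]
    refine Finset.sum_congr rfl fun i _ => ?_
    rw [map_prod]
    simp only [map_pow, aeval_X, mul_pow]
    rw [Finset.prod_mul_distrib]
    simp only [← C_pow]
    rw [← map_prod (C : k →+* MvPolynomial (Fin 4) k), autFA_prodpow, C_mul_monomial, mul_one]
  have key2 : FA k A = ∑ i : Fin 4, monomial (d i) (1 : k) := by
    rw [FA]
    exact Finset.sum_congr rfl fun i _ => autFA_prodpow k (A i)
  have hcoeff : ∀ (e : Fin 4 → k) (i : Fin 4),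
      coeff (d i) (∑ i' : Fin 4, monomial (d i') (e i')) = e i := by
    intro e i
    rw [coeff_sum]
    rw [Finset.sum_eq_single i]
    · simp [coeff_monomial]
    · intro i' _ hne
      rw [coeff_monomial, if_neg (fun h => hne (hdinj h.symm).symm)]
    · simp
  constructor
  · intro h i
    have h' := h
    rw [key, key2] at h'
    have := congrArg (coeff (d i)) h'
    rw [hcoeff, hcoeff] at this
    have hci : c i = 1 := this
    have : ((∏ j : Fin 4, lam j ^ A i j : kˣ) : k) = ((1 : kˣ) : k) := by
      push_cast
      simpa using hci
    exact Units.ext this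
  · intro h
    rw [key, key2]
    refine Finset.sum_congr rfl fun i _ => ?_
    have : c i = 1 := by
      have := congrArg (Units.val) (h i)
      push_cast at this
      simpa using this
    rw [this]

open Matrix in
private lemma autFA_card_quot (B : Matrix (Fin 4) (Fin 4) ℤ) (hB : B.det ≠ 0) :
    Nat.card ((Fin 4 → ℤ) ⧸ Submodule.span ℤ (Set.range B)) = B.det.natAbs := by
  classical
  set ψ : (Fin 4 → ℤ) →ₗ[ℤ] (Fin 4 → ℤ) := Matrix.toLin' Bᵀ with hψ
  have hψeq : ψ = (Bᵀ).mulVecLin := by ext v j; rfl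
  have hNrange : LinearMap.range ψ = Submodule.span ℤ (Set.range B) := by
    rw [hψeq, Matrix.range_mulVecLin, Matrix.col_transpose, Matrix.row]
  have hdetψ : LinearMap.det ψ = B.det := by
    rw [hψ, LinearMap.det_toLin', Matrix.det_transpose]
  have hinj : Function.Injective ψ := by
    rw [← LinearMap.ker_eq_bot]
    rw [LinearMap.ker_eq_bot']
    intro v hv
    rw [hψeq] at hv
    have hv' : (Bᵀ).mulVec v = 0 := hv
    have h2 : ((Bᵀ).adjugate * Bᵀ).mulVec v = 0 := by
      rw [← Matrix.mulVec_mulVec, hv', Matrix.mulVec_zero]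
    rw [Matrix.adjugate_mul, Matrix.smul_mulVec, Matrix.one_mulVec] at h2
    funext j
    have := congrFun h2 j
    simp only [Pi.smul_apply, smul_eq_mul, Pi.zero_apply] at this
    rcases mul_eq_zero.mp this with h | h
    · exact absurd h (by rwa [Matrix.det_transpose])
    · exact h
  set N : Submodule ℤ (Fin 4 → ℤ) := LinearMap.range ψ with hN
  rw [← hNrange]
  let eiso : (Fin 4 → ℤ) ≃ₗ[ℤ] N := LinearEquiv.ofInjective ψ hinj
  obtain ⟨n, snf⟩ := N.smithNormalForm (Pi.basisFun ℤ (Fin 4))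
  have hn : n = 4 := by
    have h1 : Module.finrank ℤ N = 4 := by
      rw [← eiso.finrank_eq]
      simp [Module.finrank_fintype_fun_eq_card]
    have h2 : Module.finrank ℤ N = n := Module.finrank_eq_card_basis snf.bN ▸ by simp
    omega
  subst hn
  have hindex : N.toAddSubgroup.index = ∏ i : Fin 4, (snf.a i).natAbs := by
    rw [snf.toAddSubgroup_index_eq_ite]
    simp only [Fintype.card_fin, if_pos rfl]
    refine Finset.prod_congr rfl fun i _ => ?_
    rw [Ideal.span_singleton_toAddSubgroup_eq_zmultiples, Int.index_zmultiples]
  let fe : Fin 4 ≃ Fin 4 :=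
    Equiv.ofBijective snf.f (Finite.injective_iff_bijective.mp snf.f.injective)
  let eS : (Fin 4 → ℤ) ≃ₗ[ℤ] N := snf.bM.equiv snf.bN fe.symm
  have hfe : ∀ i, snf.f i = fe i := fun i => rfl
  have hg : ∀ j, (N.subtype ∘ₗ (eS : (Fin 4 → ℤ) →ₗ[ℤ] N)) (snf.bM j)
      = snf.a (fe.symm j) • snf.bM j := by
    intro j
    simp only [LinearMap.comp_apply, LinearEquiv.coe_coe, eS, Module.Basis.equiv_apply]
    rw [Submodule.coe_subtype, snf.snf, hfe, Equiv.apply_symm_apply]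
  have hmat : LinearMap.toMatrix snf.bM snf.bM (N.subtype ∘ₗ (eS : (Fin 4 → ℤ) →ₗ[ℤ] N))
      = Matrix.diagonal (fun j => snf.a (fe.symm j)) := by
    ext i j
    rw [LinearMap.toMatrix_apply, hg, _root_.map_smul, Module.Basis.repr_self, Finsupp.smul_single,
      smul_eq_mul, mul_one]
    by_cases h : i = j
    · rw [h, Matrix.diagonal_apply_eq, Finsupp.single_eq_same]
    · rw [Matrix.diagonal_apply_ne _ h, Finsupp.single_eq_of_ne h]
  have hdetg : (LinearMap.det (N.subtype ∘ₗ (eS : (Fin 4 → ℤ) →ₗ[ℤ] N))).natAbs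
      = ∏ i : Fin 4, (snf.a i).natAbs := by
    rw [← LinearMap.det_toMatrix snf.bM, hmat, Matrix.det_diagonal]
    exact (map_prod Int.natAbsHom (fun i => snf.a (fe.symm i)) Finset.univ).trans
      (Fintype.prod_equiv fe.symm _ _ fun j => rfl)
  have hsub : N.subtype ∘ₗ (eiso : (Fin 4 → ℤ) →ₗ[ℤ] N) = ψ :=
    LinearMap.ext fun v => LinearEquiv.ofInjective_apply ψ (h := hinj) v
  have hassoc : (LinearMap.det (N.subtype ∘ₗ (eS : (Fin 4 → ℤ) →ₗ[ℤ] N))).natAbs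
      = (LinearMap.det (N.subtype ∘ₗ (eiso : (Fin 4 → ℤ) →ₗ[ℤ] N))).natAbs :=
    Int.natAbs_eq_iff_associated.mpr (LinearMap.associated_det_comp_equiv _ _ _)
  have hfinal : B.det.natAbs = ∏ i : Fin 4, (snf.a i).natAbs := by
    rw [← hdetψ, ← hsub, ← hassoc, hdetg]
  rw [hfinal, ← hindex]
  rfl

private lemma autFA_count_homs (k : Type*) [Field k] [IsAlgClosed k]
    (N : Submodule ℤ (Fin 4 → ℤ))
    (m : ℕ) (hm : Nat.card ((Fin 4 → ℤ) ⧸ N) = m) (hm0 : m ≠ 0) (hchar : (m : k) ≠ 0) :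
    Nat.card {φ : (Fin 4 → ℤ) →ₗ[ℤ] Additive kˣ // N ≤ LinearMap.ker φ} = m := by
  set Q := (Fin 4 → ℤ) ⧸ N with hQ
  haveI : Finite Q := Nat.finite_of_card_ne_zero (by rw [hm]; exact hm0)
  let e3 : (Q →ₗ[ℤ] Additive kˣ) ≃ {φ : (Fin 4 → ℤ) →ₗ[ℤ] Additive kˣ // N ≤ LinearMap.ker φ} :=
    { toFun := fun ψ => ⟨ψ ∘ₗ N.mkQ, fun x hx => by
        have h0 : N.mkQ x = 0 := (Submodule.Quotient.mk_eq_zero N).mpr hx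
        simp [LinearMap.mem_ker, h0]⟩
      invFun := fun φ => N.liftQ φ.1 φ.2
      left_inv := fun ψ => Submodule.linearMap_qext N (Submodule.liftQ_mkQ _ _ _)
      right_inv := fun φ => Subtype.ext (Submodule.liftQ_mkQ _ _ _) }
  let e4 : (Q →+ Additive kˣ) ≃ (Q →ₗ[ℤ] Additive kˣ) :=
    (addMonoidHomLequivInt (R := ℤ)).toEquiv
  let e5 : (Q →+ Additive kˣ) ≃ (Multiplicative Q →* kˣ) := AddMonoidHom.toMultiplicativeLeft
  have hcardG : Nat.card (Multiplicative Q) = m := by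
    rw [← hm]; exact Nat.card_congr Multiplicative.ofAdd.symm
  have hexp : Monoid.exponent (Multiplicative Q) ∣ m := by
    rw [← hcardG]; exact Group.exponent_dvd_nat_card
  haveI : NeZero ((Monoid.exponent (Multiplicative Q) : k)) := by
    constructor
    intro h
    have h1 : ringChar k ∣ Monoid.exponent (Multiplicative Q) := (ringChar.spec k _).mp h
    have h2 : ringChar k ∣ m := h1.trans hexp
    rcases Nat.eq_zero_or_pos (ringChar k) with h0 | h0
    · rw [h0] at h2
      exact hm0 (Nat.eq_zero_of_zero_dvd h2)
    · apply hchar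
      rcases h2 with ⟨c, rfl⟩
      push_cast
      rw [ringChar.spec k (ringChar k) |>.mpr dvd_rfl]
      ring
  obtain ⟨du⟩ := CommGroup.monoidHom_mulEquiv_of_hasEnoughRootsOfUnity (Multiplicative Q) k
  calc Nat.card {φ : (Fin 4 → ℤ) →ₗ[ℤ] Additive kˣ // N ≤ LinearMap.ker φ}
      = Nat.card (Q →ₗ[ℤ] Additive kˣ) := Nat.card_congr e3.symm
    _ = Nat.card (Q →+ Additive kˣ) := Nat.card_congr e4.symm
    _ = Nat.card (Multiplicative Q →* kˣ) := Nat.card_congr e5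
    _ = Nat.card (Multiplicative Q) := Nat.card_congr du.toEquiv
    _ = m := hcardG

private lemma autFA_corr (k : Type*) [Field k] (A : Matrix (Fin 4) (Fin 4) ℕ) :
    Nat.card {lam : Fin 4 → kˣ // ∀ i : Fin 4, ∏ j : Fin 4, lam j ^ A i j = 1}
      = Nat.card {φ : (Fin 4 → ℤ) →ₗ[ℤ] Additive kˣ //
          Submodule.span ℤ (Set.range (A.map (Nat.cast : ℕ → ℤ))) ≤ LinearMap.ker φ} := by
  classical
  set B := A.map (Nat.cast : ℕ → ℤ) with hB
  let E : (Fin 4 → kˣ) ≃ ((Fin 4 → ℤ) →ₗ[ℤ] Additive kˣ) :=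
    (Equiv.piCongrRight fun _ => Additive.ofMul).trans
      ((Pi.basisFun ℤ (Fin 4)).constr ℕ).toEquiv
  refine Nat.card_congr (Equiv.subtypeEquiv E fun lam => ?_)
  have happ : ∀ (i : Fin 4), (E lam) (B i) = ∑ j : Fin 4, B i j • Additive.ofMul (lam j) := by
    intro i
    show ((Pi.basisFun ℤ (Fin 4)).constr ℕ (fun j => Additive.ofMul (lam j))) (B i)
      = ∑ j : Fin 4, B i j • Additive.ofMul (lam j)
    rw [Module.Basis.constr_apply_fintype]
    simp [Pi.basisFun_equivFun]
  have key : ∀ i : Fin 4, (B i ∈ LinearMap.ker (E lam)) ↔ ∏ j : Fin 4, lam j ^ A i j = 1 := by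
    intro i
    rw [LinearMap.mem_ker, happ, ← toMul_eq_one, toMul_sum]
    rw [Finset.prod_congr rfl fun j _ => show ((B i j • Additive.ofMul (lam j)).toMul)
      = lam j ^ A i j by rw [toMul_zsmul, toMul_ofMul, hB]; simp [Matrix.map_apply]]
  rw [Submodule.span_le]
  exact ⟨fun h => by rintro _ ⟨i, rfl⟩; exact (key i).mpr (h i), fun h i => (key i).mp (h ⟨i, rfl⟩)⟩

/-- Over an algebraically closed field `k` of characteristic `p ≥ 0`, if `det A ≠ 0` and
`p ∤ det A`, then `Aut(F_A)` is finite of cardinality `|det A|`. -/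
theorem autFA_finite_card_det
    (k : Type*) [Field k] [IsAlgClosed k] (A : Matrix (Fin 4) (Fin 4) ℕ)
    (hA : (A.map (Nat.cast : ℕ → ℤ)).det ≠ 0)
    (hp : ¬ ((ringChar k : ℤ) ∣ (A.map (Nat.cast : ℕ → ℤ)).det)) :
    (AutFA k A).Finite ∧ (AutFA k A).ncard = ((A.map (Nat.cast : ℕ → ℤ)).det).natAbs := by
  classical
  set B := A.map (Nat.cast : ℕ → ℤ) with hB
  set N := Submodule.span ℤ (Set.range B) with hN
  set m := B.det.natAbs with hm'
  have hm : Nat.card ((Fin 4 → ℤ) ⧸ N) = m := autFA_card_quot B hA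
  have hm0 : m ≠ 0 := Int.natAbs_ne_zero.mpr hA
  have hchar : (m : k) ≠ 0 := by
    intro h
    apply hp
    have h1 : ringChar k ∣ m := (ringChar.spec k m).mp h
    have h2 : (ringChar k : ℤ) ∣ (m : ℤ) := Int.natCast_dvd_natCast.mpr h1
    exact Int.dvd_natAbs.mp h2
  have hcorr : Nat.card ↥(AutFA k A) = m := by
    calc Nat.card ↥(AutFA k A)
        = Nat.card {lam : Fin 4 → kˣ // ∀ i : Fin 4, ∏ j : Fin 4, lam j ^ A i j = 1} :=
          Nat.card_congr (Equiv.subtypeEquivRight fun lam => autFA_mem_iff k A hA lam)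
      _ = Nat.card {φ : (Fin 4 → ℤ) →ₗ[ℤ] Additive kˣ // N ≤ LinearMap.ker φ} :=
          autFA_corr k A
      _ = m := autFA_count_homs k N m hm hm0 hchar
  have hfin : (AutFA k A).Finite := by
    rw [← Set.finite_coe_iff]
    exact Nat.finite_of_card_ne_zero (by rw [hcorr]; exact hm0)
  exact ⟨hfin, by rw [← Nat.card_coe_set_eq, hcorr]⟩
end

section
/- Let d ≥ 1 and let H ⊆ (ℤ/d)⁴ be a subgroup. Suppose that 𝔄_d ∩ H contains exactly one element a₀ of age 1, and let h denote the order of a₀ in the additive group (ℤ/d)⁴. Then 𝔈_d(0) ∩ H = {n·a₀ : 1 ≤ n ≤ h, gcd(n,h) = 1}, and this set has cardinality φ(h), where φ is Euler's totient function. -/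
/-- `M_d`: quadruples in `(ℤ/d)⁴` whose coordinates sum to zero, with all coordinates
nonzero (here: the subset `𝔄_d ⊆ M_d`). -/
def frakA (d : ℕ) : Set (Fin 4 → ZMod d) :=
  {a | (∑ i, a i = 0) ∧ ∀ i, a i ≠ 0}

/-- The age `S(a) = Σᵢ ⟨âᵢ/d⟩`, where `âᵢ ∈ ℤ` is any lift of `aᵢ` (we use the canonical
lift `(a i).val`; the fractional part is independent of the choice of lift). -/
noncomputable def age {d : ℕ} (a : Fin 4 → ZMod d) : ℚ :=
  ∑ i, Int.fract (((a i).val : ℚ) / d)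

/-- `𝔅_d(0)`: elements of `𝔄_d` all of whose `(ℤ/d)ˣ`-multiples have age 2. -/
noncomputable def frakB0 (d : ℕ) : Set (Fin 4 → ZMod d) :=
  {a ∈ frakA d | ∀ t : (ZMod d)ˣ, age (fun i => (t : ZMod d) * a i) = 2}

/-- `𝔈_d(0) = 𝔄_d \ 𝔅_d(0)` (denoted `𝔍_d(0)` in the paper). -/
noncomputable def frakE0 (d : ℕ) : Set (Fin 4 → ZMod d) :=
  frakA d \ frakB0 d

section aux

set_option linter.unusedSectionVars false

variable {d : ℕ} [NeZero d]

lemma mem_frakA_unit_mul {a : Fin 4 → ZMod d} (ha : a ∈ frakA d) (t : (ZMod d)ˣ) :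
    (fun i => (t : ZMod d) * a i) ∈ frakA d := by
  refine ⟨by rw [← Finset.mul_sum, ha.1, mul_zero], fun i => ?_⟩
  simp [Units.mul_right_eq_zero, ha.2 i]

lemma fract_val {x : ZMod d} : Int.fract ((x.val : ℚ) / d) = (x.val : ℚ) / d := by
  have hd : 0 < (d : ℚ) := by exact_mod_cast Nat.pos_of_ne_zero (NeZero.ne d)
  refine Int.fract_eq_self.mpr ⟨by positivity, ?_⟩
  rw [div_lt_one hd]
  exact_mod_cast x.val_lt

lemma age_rat {a : Fin 4 → ZMod d} :
    age a = ((∑ i, (a i).val : ℕ) : ℚ) / d := by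
  simp only [age, fract_val]
  push_cast
  rw [Finset.sum_div]

lemma sum_val_eq {a : Fin 4 → ZMod d} (ha : a ∈ frakA d) :
    ∃ k : ℕ, 1 ≤ k ∧ k ≤ 3 ∧ (∑ i, (a i).val) = k * d := by
  have hdvd : d ∣ ∑ i, (a i).val := by
    rw [← ZMod.natCast_eq_zero_iff]
    push_cast
    simp only [ZMod.natCast_zmod_val]
    exact ha.1
  obtain ⟨k, hk⟩ := hdvd
  have hub : ∀ i, (a i).val ≤ d - 1 := fun i => by
    have := (a i).val_lt; omega
  have hlb : ∀ i, 1 ≤ (a i).val := fun i => ZMod.val_pos.mpr (ha.2 i)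
  have h4 : 4 ≤ ∑ i, (a i).val := by
    calc (4 : ℕ) = ∑ _i : Fin 4, 1 := by simp
    _ ≤ _ := Finset.sum_le_sum fun i _ => hlb i
  have hub' : ∑ i, (a i).val ≤ 4 * (d - 1) := by
    calc ∑ i, (a i).val ≤ ∑ _i : Fin 4, (d - 1) := Finset.sum_le_sum fun i _ => hub i
    _ = 4 * (d - 1) := by simp [mul_comm]
  have hd1 : 1 ≤ d := Nat.pos_of_ne_zero (NeZero.ne d)
  refine ⟨k, ?_, ?_, by rw [hk, mul_comm]⟩
  · rcases Nat.eq_zero_or_pos k with h0 | h1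
    · rw [h0, mul_zero] at hk; omega
    · exact h1
  · by_contra hkk
    push_neg at hkk
    have hge : 4 * d ≤ d * k := by
      calc 4 * d = d * 4 := by ring
      _ ≤ d * k := Nat.mul_le_mul_left d hkk
    rw [← hk] at hge
    omega

lemma age_cases {a : Fin 4 → ZMod d} (ha : a ∈ frakA d) :
    age a = 1 ∨ age a = 2 ∨ age a = 3 := by
  obtain ⟨k, hk1, hk3, hk⟩ := sum_val_eq ha
  have hd : (d : ℚ) ≠ 0 := by exact_mod_cast NeZero.ne d
  have : age a = k := by
    rw [age_rat, hk]; push_cast; field_simp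
  rw [this]
  interval_cases k <;> norm_num

lemma age_neg {a : Fin 4 → ZMod d} (ha : a ∈ frakA d) :
    age (fun i => -(a i)) = 4 - age a := by
  have hd : (d : ℚ) ≠ 0 := by exact_mod_cast NeZero.ne d
  have hv : ∀ i, ((-(a i)).val : ℚ) / d = 1 - ((a i).val : ℚ) / d := fun i => by
    rw [ZMod.neg_val, if_neg (ha.2 i)]
    have := (a i).val_lt
    push_cast [Nat.cast_sub this.le]
    field_simp
  simp only [age, fract_val]
  simp only [hv]
  rw [Finset.sum_sub_distrib]
  simp [age, fract_val]

lemma unit_mul_eq_smul (c : ZMod d) (a : Fin 4 → ZMod d) :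
    (fun i => c * a i) = c.val • a := by
  funext i
  simp [Pi.smul_apply, nsmul_eq_mul, ZMod.natCast_zmod_val]

end aux

/-- If `𝔄_d ∩ H` contains exactly one element `a₀` of age 1, and `h` is the additive order of
`a₀`, then `𝔈_d(0) ∩ H = {n·a₀ : 1 ≤ n ≤ h, gcd(n,h) = 1}`, a set of cardinality `φ(h)`. -/
theorem frakE0_inter_eq_orbit (d : ℕ) (hd : 1 ≤ d) (H : AddSubgroup (Fin 4 → ZMod d))
    (a₀ : Fin 4 → ZMod d) (ha₀A : a₀ ∈ frakA d) (ha₀H : a₀ ∈ H) (hage : age a₀ = 1)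
    (huniq : ∀ b, b ∈ frakA d → b ∈ H → age b = 1 → b = a₀) :
    frakE0 d ∩ H =
      {x | ∃ n : ℕ, 1 ≤ n ∧ n ≤ addOrderOf a₀ ∧ Nat.gcd n (addOrderOf a₀) = 1 ∧ x = n • a₀} ∧
    (frakE0 d ∩ H).ncard = Nat.totient (addOrderOf a₀) := by
  have : NeZero d := ⟨by omega⟩
  set h := addOrderOf a₀ with hh
  have hda : d • a₀ = 0 := by
    funext i
    simp [Pi.smul_apply, nsmul_eq_mul, ZMod.natCast_self]
  have hhd : h ∣ d := addOrderOf_dvd_of_nsmul_eq_zero hda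
  have ha0ne : a₀ ≠ 0 := by
    intro h0
    exact ha₀A.2 0 (by rw [h0]; rfl)
  have hh0 : h ≠ 0 := fun h0 => by
    rw [h0] at hhd
    exact absurd (Nat.eq_zero_of_zero_dvd hhd) (by omega)
  have hh1 : h ≠ 1 := fun h1 => ha0ne (AddMonoid.addOrderOf_eq_one_iff.mp h1)
  have hh2 : 2 ≤ h := by omega
  have hsmula₀ : h • a₀ = 0 := addOrderOf_nsmul_eq_zero a₀
  have hmod : ∀ n : ℕ, (n % h) • a₀ = n • a₀ := fun n => mod_addOrderOf_nsmul a₀ n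
  have hset : frakE0 d ∩ H =
      {x | ∃ n : ℕ, 1 ≤ n ∧ n ≤ h ∧ Nat.gcd n h = 1 ∧ x = n • a₀} := by
    ext a
    constructor
    · rintro ⟨⟨haA, hnB⟩, haH⟩
      have hex : ∃ t : (ZMod d)ˣ, age (fun i => (t : ZMod d) * a i) ≠ 2 := by
        by_contra hc
        push_neg at hc
        exact hnB ⟨haA, hc⟩
      obtain ⟨t, ht⟩ := hex
      have key : ∃ u : (ZMod d)ˣ, age (fun i => (u : ZMod d) * a i) = 1 := by
        have hbA := mem_frakA_unit_mul haA t
        rcases age_cases hbA with h1 | h2 | h3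
        · exact ⟨t, h1⟩
        · exact absurd h2 ht
        · refine ⟨-t, ?_⟩
          have heq : (fun i => ((-t : (ZMod d)ˣ) : ZMod d) * a i)
              = fun i => -((t : ZMod d) * a i) := by
            funext i; push_cast; ring
          rw [heq, age_neg hbA, h3]
          norm_num
      obtain ⟨u, hu⟩ := key
      have hbA := mem_frakA_unit_mul haA u
      have hbH : (fun i => (u : ZMod d) * a i) ∈ H := by
        rw [unit_mul_eq_smul]
        exact H.nsmul_mem haH _
      have heq : (fun i => (u : ZMod d) * a i) = a₀ := huniq _ hbA hbH hu
      have ha : a = fun i => ((u⁻¹ : (ZMod d)ˣ) : ZMod d) * a₀ i := by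
        funext i
        have := congrFun heq i
        rw [← this, ← mul_assoc]
        simp
      set m := ((u⁻¹ : (ZMod d)ˣ) : ZMod d).val with hm
      have hcopd : Nat.Coprime m d := ZMod.val_coe_unit_coprime u⁻¹
      have hcoph : Nat.Coprime m h := Nat.Coprime.coprime_dvd_right hhd hcopd
      have han : a = m • a₀ := by rw [ha, unit_mul_eq_smul]
      refine ⟨m % h, ?_, ?_, ?_, ?_⟩
      · rcases Nat.eq_zero_or_pos (m % h) with h0 | h1
        · exfalso
          have hdvd : h ∣ m := Nat.dvd_of_mod_eq_zero h0
          have : h ∣ Nat.gcd m h := Nat.dvd_gcd hdvd dvd_rfl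
          rw [hcoph] at this
          exact hh1 (Nat.dvd_one.mp this)
        · exact h1
      · exact le_of_lt (Nat.mod_lt _ (by omega))
      · rw [← Nat.gcd_rec, Nat.gcd_comm]
        exact hcoph
      · rw [hmod, han]
    · rintro ⟨n, hn1, hnh, hgcd, rfl⟩
      have hcop : Nat.Coprime n h := hgcd
      have hxH : n • a₀ ∈ H := H.nsmul_mem ha₀H n
      have hxA : n • a₀ ∈ frakA d := by
        constructor
        · have hs : ∑ i, (n • a₀) i = n • ∑ i, a₀ i := by
            simp [Pi.smul_apply, Finset.smul_sum]
          rw [hs, ha₀A.1, smul_zero]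
        · intro i
          have hcoord : h • a₀ i = 0 := by
            have := congrFun hsmula₀ i
            simpa using this
          have hodvd : addOrderOf (a₀ i) ∣ h := addOrderOf_dvd_of_nsmul_eq_zero hcoord
          intro hzero
          have hodn : addOrderOf (a₀ i) ∣ n := by
            apply addOrderOf_dvd_of_nsmul_eq_zero
            simpa using hzero
          have h1 : addOrderOf (a₀ i) ∣ Nat.gcd n h := Nat.dvd_gcd hodn hodvd
          rw [hgcd] at h1
          exact ha₀A.2 i (AddMonoid.addOrderOf_eq_one_iff.mp (Nat.dvd_one.mp h1))
      refine ⟨⟨hxA, ?_⟩, hxH⟩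
      intro hB
      obtain ⟨t, ht⟩ := ZMod.unitsMap_surjective hhd ((ZMod.unitOfCoprime n hcop)⁻¹)
      have hB2 := hB.2 t
      have hcast : (((t : ZMod d).val * n : ℕ) : ZMod h) = ((1 : ℕ) : ZMod h) := by
        push_cast
        have h1 : (((t : ZMod d).val : ℕ) : ZMod h)
            = (((ZMod.unitOfCoprime n hcop)⁻¹ : (ZMod h)ˣ) : ZMod h) := by
          rw [ZMod.natCast_val, ← ht, ZMod.unitsMap_def, Units.coe_map]
          rfl
        rw [h1, ← ZMod.coe_unitOfCoprime n hcop, ← Units.val_mul, inv_mul_cancel,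
          Units.val_one]
      have hcong : ((t : ZMod d).val * n) % h = 1 % h :=
        (ZMod.natCast_eq_natCast_iff _ _ _).mp hcast
      have hfun : (fun i => (t : ZMod d) * (n • a₀) i) = ((t : ZMod d).val * n) • a₀ := by
        funext i
        simp only [Pi.smul_apply, nsmul_eq_mul]
        push_cast [ZMod.natCast_zmod_val]
        ring
      rw [hfun, ← hmod, hcong, hmod, one_nsmul, hage] at hB2
      norm_num at hB2
  refine ⟨hset, ?_⟩
  classical
  have htot : Nat.totient h = ((Finset.range h).filter h.Coprime).card :=
    Nat.totient_eq_card_coprime h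
  have himg : frakE0 d ∩ H
      = ↑(((Finset.range h).filter h.Coprime).image (fun n => n • a₀)) := by
    rw [hset]
    ext x
    simp only [Set.mem_setOf_eq, Finset.coe_image, Set.mem_image, Finset.mem_coe,
      Finset.mem_filter, Finset.mem_range]
    constructor
    · rintro ⟨n, hn1, hnh, hgcd, rfl⟩
      refine ⟨n, ⟨?_, ?_⟩, rfl⟩
      · rcases Nat.lt_or_ge n h with hlt | hge
        · exact hlt
        · exfalso
          have : n = h := le_antisymm hnh hge
          rw [this, Nat.gcd_self] at hgcd
          omega
      · rw [Nat.Coprime, Nat.gcd_comm]; exact hgcd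
    · rintro ⟨n, ⟨hn, hcop⟩, rfl⟩
      refine ⟨n, ?_, le_of_lt hn, by rw [Nat.gcd_comm]; exact hcop, rfl⟩
      rcases Nat.eq_zero_or_pos n with h0 | h1
      · exfalso
        rw [h0] at hcop
        rw [Nat.Coprime, Nat.gcd_zero_right] at hcop
        omega
      · exact h1
  rw [himg, Set.ncard_coe_finset, Finset.card_image_of_injOn, ← htot]
  intro n hn m hm heq
  simp only [Finset.coe_filter, Finset.mem_range, Set.mem_setOf_eq] at hn hm
  have hme := nsmul_eq_nsmul_iff_modEq.mp heq
  have h2 : n % h = m % h := hme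
  have hn' : n % h = n := Nat.mod_eq_of_lt hn.1
  have hm' : m % h = m := Nat.mod_eq_of_lt hm.1
  omega
end

section
/- Let d ≥ 1, let p be a prime with p ∤ d, and let H ⊆ (ℤ/d)⁴ be a subgroup. Suppose that 𝔄_d ∩ H contains exactly one element a₀ of age 1, and let h denote the order of a₀ in (ℤ/d)⁴. Then the cardinality of 𝔈_d(0) ∩ H equals φ(h), and the cardinality of 𝔈_d(p) ∩ H equals 0 if p^ℓ ≡ −1 (mod h) for some positive integer ℓ, and equals φ(h) if p^ℓ ≢ −1 (mod h) for all positive integers ℓ, where φ is Euler's totient function. -/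
/-- `𝔅_d(p)` for a prime `p ∤ d`, where `f = orderOf (p : ZMod d)` is the multiplicative
order of `p` mod `d`: elements `a ∈ 𝔄_d` with `Σ_{j<f} S(t·pʲ·a) = 2f` for all
`t ∈ (ℤ/d)ˣ`. -/
noncomputable def frakBp (d p : ℕ) : Set (Fin 4 → ZMod d) :=
  {a ∈ frakA d | ∀ t : (ZMod d)ˣ,
    ∑ j ∈ Finset.range (orderOf (p : ZMod d)),
      age (fun i => (t : ZMod d) * (p : ZMod d) ^ j * a i) =
        2 * (orderOf (p : ZMod d) : ℚ)}

/-- `𝔈_d(p) = 𝔄_d \ 𝔅_d(p)` (denoted `𝔍_d(p)` in the paper). -/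
noncomputable def frakEp (d p : ℕ) : Set (Fin 4 → ZMod d) :=
  frakA d \ frakBp d p

/-- The orbit of `b ∈ (ℤ/d)⁴` under the cyclic subgroup `⟨p⟩ ⊆ (ℤ/d)ˣ`. -/
def pOrbit (d p : ℕ) (b : Fin 4 → ZMod d) : Set (Fin 4 → ZMod d) :=
  {x | ∃ j : ℕ, x = fun i => (p : ZMod d) ^ j * b i}


section aux
variable {d : ℕ} [NeZero d]

lemma age_eq_sum (b : Fin 4 → ZMod d) : age b = (∑ i, ((b i).val : ℚ)) / d := by
  unfold age
  rw [Finset.sum_div]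
  refine Finset.sum_congr rfl fun i _ => ?_
  have hd : (0:ℚ) < d := by exact_mod_cast (NeZero.pos d)
  rw [Int.fract_eq_self.2 ⟨by positivity, by
    rw [div_lt_one hd]; exact_mod_cast (b i).val_lt⟩]

lemma frakA_sum_val {b : Fin 4 → ZMod d} (hb : b ∈ frakA d) :
    ∃ k : ℕ, (k = 1 ∨ k = 2 ∨ k = 3) ∧ ∑ i, (b i).val = k * d := by
  have hd1 : d ≠ 1 := by
    rintro rfl
    exact hb.2 0 (Subsingleton.elim _ _)
  have hd2 : 2 ≤ d := by have := NeZero.pos d; omega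
  have hdvd : d ∣ ∑ i, (b i).val := by
    rw [← ZMod.natCast_eq_zero_iff]
    push_cast
    have : ∀ i, (((b i).val : ℕ) : ZMod d) = b i := fun i => ZMod.natCast_zmod_val _
    rw [Finset.sum_congr rfl fun i _ => this i]
    exact hb.1
  obtain ⟨k, hk⟩ := hdvd
  have hlow : ∀ i, 1 ≤ (b i).val := fun i =>
    Nat.one_le_iff_ne_zero.2 fun h => hb.2 i ((ZMod.val_eq_zero _).1 h)
  have hhigh : ∀ i, (b i).val ≤ d - 1 := fun i => by
    have := (b i).val_lt; omega
  have h4 : 4 ≤ ∑ i, (b i).val := by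
    calc (4:ℕ) = ∑ _i : Fin 4, 1 := by simp
    _ ≤ _ := Finset.sum_le_sum fun i _ => hlow i
  have h4d : ∑ i, (b i).val ≤ 4 * (d - 1) := by
    calc ∑ i, (b i).val ≤ ∑ _i : Fin 4, (d - 1) := Finset.sum_le_sum fun i _ => hhigh i
    _ = 4 * (d - 1) := by simp [Finset.sum_const]
  have hk1 : 1 ≤ k := by
    rcases Nat.eq_zero_or_pos k with rfl | h
    · rw [mul_zero] at hk; omega
    · exact h
  have hk3 : k ≤ 3 := by
    by_contra hcon
    push_neg at hcon
    have h1 : d * 4 ≤ d * k := Nat.mul_le_mul_left d (by omega)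
    have h1' : d * 4 ≤ ∑ i, (b i).val := by rw [hk]; exact h1
    omega
  exact ⟨k, by omega, by rw [hk, mul_comm]⟩

lemma age_of_frakA {b : Fin 4 → ZMod d} (hb : b ∈ frakA d) :
    age b = 1 ∨ age b = 2 ∨ age b = 3 := by
  obtain ⟨k, hk13, hsum⟩ := frakA_sum_val hb
  have hd : (d:ℚ) ≠ 0 := by exact_mod_cast (NeZero.ne d)
  have hage : age b = k := by
    rw [age_eq_sum]
    have : (∑ i, ((b i).val : ℚ)) = ((k * d : ℕ) : ℚ) := by
      rw [← hsum]; push_cast; ring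
    rw [this]; push_cast; field_simp
  rcases hk13 with h | h | h <;> rw [hage, h] <;> norm_num

lemma neg_mem_frakA {b : Fin 4 → ZMod d} (hb : b ∈ frakA d) :
    (fun i => -(b i)) ∈ frakA d := by
  refine ⟨by simp [hb.1], fun i => neg_ne_zero.2 (hb.2 i)⟩

lemma age_add_age_neg {b : Fin 4 → ZMod d} (hb : b ∈ frakA d) :
    age b + age (fun i => -(b i)) = 4 := by
  have hd : (0:ℚ) < d := by exact_mod_cast (NeZero.pos d)
  rw [age_eq_sum, age_eq_sum, ← add_div]
  have key : ∀ i, (((fun i => -(b i)) i).val : ℚ) = d - (b i).val := by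
    intro i
    have : NeZero (b i) := ⟨hb.2 i⟩
    show (((-(b i)).val : ℕ) : ℚ) = _
    rw [ZMod.val_neg_of_ne_zero]
    push_cast [Nat.cast_sub (le_of_lt (ZMod.val_lt _))]
    ring
  rw [Finset.sum_congr rfl fun i _ => key i, Finset.sum_sub_distrib]
  field_simp
  rw [Finset.sum_const, Finset.card_univ, Fintype.card_fin, nsmul_eq_mul]
  push_cast
  ring

lemma unit_mul_mem_frakA {c : ZMod d} (hc : IsUnit c) {b : Fin 4 → ZMod d}
    (hb : b ∈ frakA d) : (fun i => c * b i) ∈ frakA d := by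
  refine ⟨by rw [← Finset.mul_sum, hb.1, mul_zero], fun i hi => hb.2 i ?_⟩
  exact (hc.mul_right_eq_zero).1 hi

lemma mul_mem_H {H : AddSubgroup (Fin 4 → ZMod d)} (c : ZMod d) {b : Fin 4 → ZMod d}
    (hb : b ∈ H) : (fun i => c * b i) ∈ H := by
  have : (fun i => c * b i) = c.val • b := by
    funext i
    simp only [Pi.smul_apply, nsmul_eq_mul, ZMod.natCast_zmod_val]
  rw [this]
  exact AddSubgroup.nsmul_mem H hb c.val

lemma sum_shift (f : ℕ) (G : ℕ → ℚ) (hG : ∀ j, G (j + f) = G j) (l : ℕ) :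
    ∑ j ∈ Finset.range f, G (j + l) = ∑ j ∈ Finset.range f, G j := by
  induction l with
  | zero => simp
  | succ l ih =>
    have h1 : ∑ j ∈ Finset.range f, G (j + l + 1) = ∑ j ∈ Finset.range f, G (j + l) := by
      have := Finset.sum_range_succ' (fun j => G (j + l)) f
      have h2 := Finset.sum_range_succ (fun j => G (j + l)) f
      -- ∑_{j<f+1} G(j+l) = ∑_{j<f} G(j+1+l) + G l  and = ∑_{j<f} G(j+l) + G (f+l)
      have h3 : G (f + l) = G l := by rw [add_comm f l, hG]
      calc ∑ j ∈ Finset.range f, G (j + l + 1)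
          = ∑ j ∈ Finset.range f, G (j + 1 + l) := by
            refine Finset.sum_congr rfl fun j _ => by ring_nf
        _ = ∑ j ∈ Finset.range f, G (j + l) := by
            have := Finset.sum_range_succ' (fun j => G (j + l)) f
            rw [h2, h3] at this
            simp only [zero_add] at this
            linarith [this]
    calc ∑ j ∈ Finset.range f, G (j + (l + 1))
        = ∑ j ∈ Finset.range f, G (j + l + 1) := by
          refine Finset.sum_congr rfl fun j _ => by ring_nf
      _ = ∑ j ∈ Finset.range f, G j := h1.trans ih

end aux

noncomputable def eFun (h : ℕ) (x : ZMod h) : ℚ :=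
  if x = 1 then -1 else if x = -1 then 1 else 0

lemma eFun_one (h : ℕ) : eFun h 1 = -1 := by simp [eFun]

lemma eFun_negone {h : ℕ} (hone : (1 : ZMod h) ≠ -1) : eFun h (-1) = 1 := by
  rw [eFun, if_neg (fun e => hone e.symm), if_pos rfl]

lemma eFun_neg {h : ℕ} (hone : (1 : ZMod h) ≠ -1) (x : ZMod h) :
    eFun h (-x) = - eFun h x := by
  by_cases h1 : x = 1
  · subst h1; rw [eFun_negone hone, eFun_one]; norm_num
  · by_cases hm : x = -1
    · rw [hm, neg_neg, eFun_one, eFun_negone hone]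
    · have hn1 : -x ≠ 1 := fun e => hm (neg_eq_iff_eq_neg.1 e)
      have hnm : -x ≠ -1 := fun e => h1 (neg_inj.1 e)
      simp only [eFun]
      rw [if_neg hn1, if_neg hnm, if_neg h1, if_neg hm]
      norm_num


/-- Suppose `𝔄_d ∩ H` contains exactly one element `a₀` of age 1, of additive order `h`, and
`p` is a prime not dividing `d`.  Then `#(𝔈_d(0) ∩ H) = φ(h)`, and `#(𝔈_d(p) ∩ H)` equals
`0` if `pˡ ≡ −1 (mod h)` for some `ℓ ≥ 1`, and equals `φ(h)` otherwise. -/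
theorem card_frakE_inter (d : ℕ) (hd : 1 ≤ d) (p : ℕ) (hp : p.Prime)
    (hpd : ¬ p ∣ d) (H : AddSubgroup (Fin 4 → ZMod d))
    (a₀ : Fin 4 → ZMod d) (ha₀A : a₀ ∈ frakA d) (ha₀H : a₀ ∈ H) (hage : age a₀ = 1)
    (huniq : ∀ b, b ∈ frakA d → b ∈ H → age b = 1 → b = a₀) :
    (frakE0 d ∩ H).ncard = Nat.totient (addOrderOf a₀) ∧
    ((∃ ℓ : ℕ, 0 < ℓ ∧ (p : ZMod (addOrderOf a₀)) ^ ℓ = -1) →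
        (frakEp d p ∩ H).ncard = 0) ∧
    ((∀ ℓ : ℕ, 0 < ℓ → (p : ZMod (addOrderOf a₀)) ^ ℓ ≠ -1) →
        (frakEp d p ∩ H).ncard = Nat.totient (addOrderOf a₀)) := by
  haveI : NeZero d := ⟨by omega⟩
  set h := addOrderOf a₀ with hh
  haveI : NeZero h := ⟨(addOrderOf_pos a₀).ne'⟩
  have hdvd : h ∣ d := by
    apply addOrderOf_dvd_of_nsmul_eq_zero
    funext i
    show d • a₀ i = 0
    rw [nsmul_eq_mul, ZMod.natCast_self, zero_mul]
  set cst : ZMod d →+* ZMod h := ZMod.castHom hdvd (ZMod h) with hcst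
  -- basic annihilator lemma
  have hzero : ∀ x : ZMod d, (∀ i, x * a₀ i = 0) ↔ cst x = 0 := by
    intro x
    have hx : ∀ i, x * a₀ i = x.val • a₀ i := fun i => by
      rw [nsmul_eq_mul, ZMod.natCast_zmod_val]
    have hcx : cst x = (x.val : ZMod h) := by
      rw [hcst, ZMod.castHom_apply, ← ZMod.natCast_val]
    constructor
    · intro hall
      have hsm : x.val • a₀ = 0 := by
        funext i
        rw [Pi.smul_apply, ← hx i, hall i, Pi.zero_apply]
      have hdvd2 : h ∣ x.val := addOrderOf_dvd_of_nsmul_eq_zero hsm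
      rw [hcx, ZMod.natCast_eq_zero_iff]
      exact hdvd2
    · intro h0 i
      have hdvd2 : h ∣ x.val := by
        rw [hcx, ZMod.natCast_eq_zero_iff] at h0
        exact h0
      obtain ⟨m, hm⟩ := hdvd2
      have hka : h • a₀ i = 0 := by
        have := addOrderOf_nsmul_eq_zero a₀
        exact congrFun this i
      rw [hx i, hm, mul_comm, mul_nsmul, smul_comm, hka, smul_zero]
  have keyA : ∀ c c' : ZMod d,
      ((fun i => c * a₀ i) = fun i => c' * a₀ i) ↔ cst c = cst c' := by
    intro c c'
    rw [funext_iff]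
    constructor
    · intro hcc
      have h1 : ∀ i, (c - c') * a₀ i = 0 := fun i => by rw [sub_mul, hcc i, sub_self]
      have h2 := (hzero _).1 h1
      rw [map_sub] at h2
      exact sub_eq_zero.1 h2
    · intro hcc i
      have h1 : cst (c - c') = 0 := by rw [map_sub, hcc, sub_self]
      have h2 := (hzero _).2 h1 i
      rw [sub_mul] at h2
      exact sub_eq_zero.1 h2
  have hone : (1 : ZMod h) ≠ -1 := by
    intro hcon
    have hneg : cst (-1) = cst 1 := by rw [map_neg, map_one, ← hcon]
    have heq := (keyA (-1) 1).2 hneg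
    have hnegfun : (fun i => -(a₀ i)) = a₀ := by
      funext i
      have := congrFun heq i
      simpa using this
    have h4 := age_add_age_neg ha₀A
    rw [hnegfun, hage] at h4
    norm_num at h4
  set F : (ZMod d)ˣ → (Fin 4 → ZMod d) := fun u => fun i => (u : ZMod d) * a₀ i with hF
  have hFA : ∀ u : (ZMod d)ˣ, F u ∈ frakA d := fun u => unit_mul_mem_frakA u.isUnit ha₀A
  have hFH : ∀ u : (ZMod d)ˣ, F u ∈ H := fun u => mul_mem_H _ ha₀H
  have age_eq_one_iff : ∀ u : (ZMod d)ˣ, age (F u) = 1 ↔ cst ↑u = 1 := by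
    intro u
    constructor
    · intro h1
      have he := huniq _ (hFA u) (hFH u) h1
      have he' : (fun i => (↑u : ZMod d) * a₀ i) = fun i => (1 : ZMod d) * a₀ i := by
        funext i
        rw [one_mul]
        exact congrFun he i
      simpa using (keyA _ _).1 he'
    · intro h1
      have he : (fun i => (↑u : ZMod d) * a₀ i) = fun i => (1 : ZMod d) * a₀ i :=
        (keyA _ _).2 (by simpa using h1)
      show age (fun i => (↑u : ZMod d) * a₀ i) = 1
      rw [he]
      simpa using hage
  have age_eq_three_iff : ∀ u : (ZMod d)ˣ, age (F u) = 3 ↔ cst ↑u = -1 := by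
    intro u
    have h4 := age_add_age_neg (hFA u)
    have hnegu : (fun i => -(F u i)) = F (-u) := by
      funext i
      show -((↑u : ZMod d) * a₀ i) = (↑(-u) : ZMod d) * a₀ i
      rw [Units.val_neg, neg_mul]
    constructor
    · intro h3
      have h1 : age (fun i => -(F u i)) = 1 := by linarith
      rw [hnegu] at h1
      have := (age_eq_one_iff (-u)).1 h1
      rw [Units.val_neg, map_neg] at this
      exact neg_eq_iff_eq_neg.1 this
    · intro hm1
      have h1 : age (F (-u)) = 1 :=
        (age_eq_one_iff (-u)).2 (by rw [Units.val_neg, map_neg, hm1, neg_neg])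
      rw [← hnegu] at h1
      linarith
  have ageU : ∀ u : (ZMod d)ˣ, age (F u) = 2 + eFun h (cst ↑u) := by
    intro u
    by_cases h1 : cst ↑u = 1
    · rw [(age_eq_one_iff u).2 h1, h1, eFun_one]
      norm_num
    · by_cases hm : cst ↑u = -1
      · rw [(age_eq_three_iff u).2 hm, hm, eFun_negone hone]
        norm_num
      · rcases age_of_frakA (hFA u) with ha | ha | ha
        · exact absurd ((age_eq_one_iff u).1 ha) h1
        · rw [ha, eFun, if_neg h1, if_neg hm]
          norm_num
        · exact absurd ((age_eq_three_iff u).1 ha) hm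
  -- characterization of E0 ∩ H
  have hE0 : frakE0 d ∩ ↑H = Set.range F := by
    ext x
    constructor
    · rintro ⟨⟨hxA, hxB⟩, hxH⟩
      have hex : ¬ ∀ t : (ZMod d)ˣ, age (fun i => (↑t : ZMod d) * x i) = 2 :=
        fun hc => hxB ⟨hxA, hc⟩
      push_neg at hex
      obtain ⟨t, ht⟩ := hex
      have htA : (fun i => (↑t : ZMod d) * x i) ∈ frakA d := unit_mul_mem_frakA t.isUnit hxA
      have htH : (fun i => (↑t : ZMod d) * x i) ∈ H := mul_mem_H _ hxH
      rcases age_of_frakA htA with h1 | h2 | h3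
      · have he := huniq _ htA htH h1
        refine ⟨t⁻¹, ?_⟩
        funext i
        show (↑t⁻¹ : ZMod d) * a₀ i = x i
        rw [← congrFun he i, ← mul_assoc, Units.inv_mul, one_mul]
      · exact absurd h2 ht
      · have hnA : (fun i => -((↑t : ZMod d) * x i)) ∈ frakA d := neg_mem_frakA htA
        have hnH : (fun i => -((↑t : ZMod d) * x i)) ∈ H := by
          exact H.neg_mem htH
        have h4 := age_add_age_neg htA
        have h1 : age (fun i => -((↑t : ZMod d) * x i)) = 1 := by linarith
        have he := huniq _ hnA hnH h1
        refine ⟨-t⁻¹, ?_⟩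
        funext i
        show (↑(-t⁻¹) : ZMod d) * a₀ i = x i
        rw [← congrFun he i, Units.val_neg, neg_mul_neg, ← mul_assoc,
          Units.inv_mul, one_mul]
    · rintro ⟨u, rfl⟩
      refine ⟨⟨hFA u, ?_⟩, hFH u⟩
      intro hB
      have h2 := hB.2 u⁻¹
      have heq : (fun i => (↑u⁻¹ : ZMod d) * (F u i)) = a₀ := by
        funext i
        show (↑u⁻¹ : ZMod d) * ((↑u : ZMod d) * a₀ i) = a₀ i
        rw [← mul_assoc, Units.inv_mul, one_mul]
      rw [heq, hage] at h2
      norm_num at h2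
  -- counting
  have hμs : Function.Surjective (ZMod.unitsMap hdvd) := ZMod.unitsMap_surjective hdvd
  have hμcoe : ∀ u : (ZMod d)ˣ, ((ZMod.unitsMap hdvd u : (ZMod h)ˣ) : ZMod h) = cst ↑u :=
    fun u => rfl
  have hFμ : ∀ u u' : (ZMod d)ˣ, F u = F u' ↔ ZMod.unitsMap hdvd u = ZMod.unitsMap hdvd u' := by
    intro u u'
    rw [show F u = (fun i => (↑u : ZMod d) * a₀ i) from rfl,
        show F u' = (fun i => (↑u' : ZMod d) * a₀ i) from rfl, keyA]
    constructor
    · intro hc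
      apply Units.ext
      rw [hμcoe, hμcoe, hc]
    · intro hc
      rw [← hμcoe, ← hμcoe, hc]
  set σ := Function.surjInv hμs with hσdef
  have hσ : ∀ v, ZMod.unitsMap hdvd (σ v) = v := fun v => Function.rightInverse_surjInv hμs v
  have hrange : Set.range F = Set.range (F ∘ σ) := by
    apply subset_antisymm
    · rintro x ⟨u, rfl⟩
      exact ⟨ZMod.unitsMap hdvd u, ((hFμ _ _).2 (hσ _))⟩
    · rintro x ⟨v, rfl⟩
      exact ⟨σ v, rfl⟩
  have hinj : Function.Injective (F ∘ σ) := by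
    intro v v' he
    have := (hFμ _ _).1 he
    rwa [hσ, hσ] at this
  have hcard : (Set.range F).ncard = Nat.totient h := by
    rw [hrange, ← Set.image_univ, Set.ncard_image_of_injective _ hinj, Set.ncard_univ,
      Nat.card_eq_fintype_card, ZMod.card_units_eq_totient]
  -- p-part setup
  have hpu : IsUnit (p : ZMod d) := (ZMod.isUnit_prime_iff_not_dvd hp).2 hpd
  obtain ⟨pu, hpuv⟩ := hpu
  set f := orderOf (p : ZMod d) with hf
  have hf1 : (p : ZMod d) ^ f = 1 := pow_orderOf_eq_one _
  have hfpos : 0 < f := by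
    have horder : orderOf pu = f := by rw [hf, ← hpuv, orderOf_units]
    rw [← horder]
    exact orderOf_pos pu
  set q : ZMod h := (p : ZMod h) with hqdef
  have hq : cst (p : ZMod d) = q := map_natCast cst p
  have hqf : q ^ f = 1 := by rw [← hq, ← map_pow, hf1, map_one]
  have claimA : ∀ w : ZMod h, (∃ l : ℕ, 0 < l ∧ q ^ l = -1) →
      ∑ j ∈ Finset.range f, eFun h (w * q ^ j) = 0 := by
    rintro w ⟨l, hl0, hl⟩
    have hper : ∀ j, (fun j => eFun h (w * q ^ j)) (j + f) = (fun j => eFun h (w * q ^ j)) j :=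
      fun j => by simp only []; rw [pow_add, hqf, mul_one]
    have hshift := sum_shift f (fun j => eFun h (w * q ^ j)) hper l
    have h2 : ∀ j, eFun h (w * q ^ (j + l)) = - eFun h (w * q ^ j) := by
      intro j
      rw [pow_add, hl, show w * (q ^ j * -1) = -(w * q ^ j) by ring, eFun_neg hone]
    rw [Finset.sum_congr rfl (fun j _ => h2 j), Finset.sum_neg_distrib] at hshift
    linarith
  have claimB : (∀ l : ℕ, 0 < l → q ^ l ≠ -1) →
      ∑ j ∈ Finset.range f, eFun h (q ^ j) ≠ 0 := by
    intro hno
    have hterm : ∀ j, eFun h (q ^ j) ≤ 0 := by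
      intro j
      have hq1 : q ^ j ≠ -1 := by
        rcases Nat.eq_zero_or_pos j with rfl | hj
        · simpa using hone
        · exact hno j hj
      by_cases e1 : q ^ j = 1
      · rw [eFun, if_pos e1]; norm_num
      · rw [eFun, if_neg e1, if_neg hq1]
    have h0 : eFun h (q ^ 0) = -1 := by rw [pow_zero, eFun_one]
    intro hsum
    have hmem : (0 : ℕ) ∈ Finset.range f := Finset.mem_range.2 hfpos
    rw [← Finset.add_sum_erase _ _ hmem, h0] at hsum
    have hrest : ∑ j ∈ (Finset.range f).erase 0, eFun h (q ^ j) ≤ 0 :=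
      Finset.sum_nonpos fun j _ => hterm j
    linarith
  have sum_ages : ∀ u t : (ZMod d)ˣ,
      ∑ j ∈ Finset.range f, age (fun i => (↑t : ZMod d) * (p : ZMod d) ^ j * (F u i)) =
        2 * (f : ℚ) + ∑ j ∈ Finset.range f, eFun h (cst ↑t * cst ↑u * q ^ j) := by
    intro u t
    have hterm : ∀ j, age (fun i => (↑t : ZMod d) * (p : ZMod d) ^ j * (F u i)) =
        2 + eFun h (cst ↑t * cst ↑u * q ^ j) := by
      intro j
      have hfun : (fun i => (↑t : ZMod d) * (p : ZMod d) ^ j * (F u i)) = F (t * u * pu ^ j) := by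
        funext i
        show (↑t : ZMod d) * (p : ZMod d) ^ j * ((↑u : ZMod d) * a₀ i)
            = (↑(t * u * pu ^ j) : ZMod d) * a₀ i
        rw [Units.val_mul, Units.val_mul, Units.val_pow_eq_pow_val, hpuv]
        ring
      rw [hfun, ageU (t * u * pu ^ j)]
      congr 1
      rw [show ((↑(t * u * pu ^ j)) : ZMod d) = (↑t : ZMod d) * ↑u * (p : ZMod d) ^ j by
        rw [Units.val_mul, Units.val_mul, Units.val_pow_eq_pow_val, hpuv]]
      rw [map_mul, map_mul, map_pow, hq]
    rw [Finset.sum_congr rfl fun j _ => hterm j, Finset.sum_add_distrib, Finset.sum_const,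
      Finset.card_range]
    push_cast
    ring
  have hBp_iff_u : ∀ u : (ZMod d)ˣ, (F u ∈ frakBp d p ↔
      ∀ t : (ZMod d)ˣ, ∑ j ∈ Finset.range f, eFun h (cst ↑t * cst ↑u * q ^ j) = 0) := by
    intro u
    constructor
    · intro hB t
      have hBt := hB.2 t
      rw [← hf] at hBt
      rw [sum_ages u t] at hBt
      linarith
    · intro hall
      refine ⟨hFA u, fun t => ?_⟩
      rw [← hf, sum_ages u t, hall t]
      ring
  have hEp_sub : frakEp d p ∩ ↑H ⊆ Set.range F := by
    rintro x ⟨⟨hxA, hxB⟩, hxH⟩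
    have hx0 : x ∈ frakE0 d ∩ ↑H := by
      refine ⟨⟨hxA, fun hB0 => hxB ⟨hxA, fun t => ?_⟩⟩, hxH⟩
      have hterm : ∀ j, age (fun i => (↑t : ZMod d) * (p : ZMod d) ^ j * x i) = 2 := by
        intro j
        have hB := hB0.2 (t * pu ^ j)
        have hfun : (fun i => (↑(t * pu ^ j) : ZMod d) * x i)
            = fun i => (↑t : ZMod d) * (p : ZMod d) ^ j * x i := by
          funext i
          rw [Units.val_mul, Units.val_pow_eq_pow_val, hpuv]
        rwa [hfun] at hB
      rw [Finset.sum_congr rfl fun j _ => hterm j, Finset.sum_const, Finset.card_range]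
      push_cast
      ring
    rw [hE0] at hx0
    exact hx0
  refine ⟨by rw [hE0]; exact hcard, ?_, ?_⟩
  · rintro ⟨l, hl0, hl⟩
    have hempty : frakEp d p ∩ ↑H = ∅ := by
      ext x
      simp only [Set.mem_empty_iff_false, iff_false]
      intro hx
      obtain ⟨u, hu⟩ := hEp_sub hx
      subst hu
      exact hx.1.2 ((hBp_iff_u u).2 fun t => claimA (cst ↑t * cst ↑u) ⟨l, hl0, hl⟩)
    rw [hempty, Set.ncard_empty]
  · intro hno
    have hEq : frakEp d p ∩ ↑H = Set.range F := by
      apply Set.Subset.antisymm hEp_sub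
      rintro x ⟨u, rfl⟩
      refine ⟨⟨hFA u, fun hB => ?_⟩, hFH u⟩
      have hsum := (hBp_iff_u u).1 hB u⁻¹
      have hc : cst ↑u⁻¹ * cst ↑u = 1 := by
        rw [← map_mul, Units.inv_mul, map_one]
      rw [Finset.sum_congr rfl (fun j _ => by rw [hc, one_mul])] at hsum
      exact claimB hno hsum
    rw [hEq]
    exact hcard
end
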